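/- The always-active threshold s = 1 is optimal, i.e. E(1) ≥ E(s) for all s ∈ {1,...,M+1}, if and only if (1/(1−p)) · ( U(1) − p·Σ_{x=1}^{M−1} U(x)(1−p)^{x−1} ) ≥ G/p + P − B. -/

import Mathlib

open Finset

/-- Expected average reward `E(s)` of the threshold-`s` policy, for `1 ≤ s ≤ M`;
`E(M+1) = 0` corresponds to the always-inactive policy. -/
noncomputable def Ereward (M : ℕ) (p G P B : ℝ) (U : ℕ → ℝ) (s : ℕ) : ℝ :=
  if s = M + 1 then 0
  else ((s : ℝ) + (1 - p) / p)⁻¹ *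
    ((∑ x ∈ Finset.Icc 1 (s - 1), U x)
      + (∑ i ∈ Finset.range (M - s), U (s + i) * (1 - p) ^ i)
      - G / p - P + B)

noncomputable def Tsum (M : ℕ) (p : ℝ) (U : ℕ → ℝ) (s : ℕ) : ℝ :=
  ∑ i ∈ Finset.range (M - s), U (s + i) * (1 - p) ^ i

lemma E_eq (M : ℕ) (p G P B : ℝ) (U : ℕ → ℝ) {s : ℕ} (hsM : s ≤ M) :
    Ereward M p G P B U s = ((s : ℝ) + (1 - p) / p)⁻¹ *
      ((∑ x ∈ Finset.Icc 1 (s - 1), U x) + Tsum M p U s - (G / p + P - B)) := by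
  rw [Ereward, if_neg (by omega), Tsum]
  ring

lemma E_top (M : ℕ) (p G P B : ℝ) (U : ℕ → ℝ) :
    Ereward M p G P B U (M + 1) = 0 := by
  rw [Ereward, if_pos rfl]

lemma Trec (M : ℕ) (p : ℝ) (U : ℕ → ℝ) {s : ℕ} (hs : s < M) :
    Tsum M p U s = U s + (1 - p) * Tsum M p U (s + 1) := by
  unfold Tsum
  have h : M - s = (M - (s + 1)) + 1 := by omega
  rw [h, Finset.sum_range_succ']
  simp only [pow_zero, mul_one, add_zero]
  have hseq : ∑ i ∈ Finset.range (M - (s+1)), U (s + (i + 1)) * (1 - p) ^ (i + 1)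
      = (1 - p) * ∑ i ∈ Finset.range (M - (s+1)), U (s + 1 + i) * (1 - p) ^ i := by
    rw [Finset.mul_sum]
    refine Finset.sum_congr rfl fun i _ => ?_
    rw [show s + (i + 1) = s + 1 + i by omega]
    ring
  rw [hseq]
  ring

lemma Unonneg (M : ℕ) (U : ℕ → ℝ)
    (hU : ∀ ⦃x y : ℕ⦄, 1 ≤ x → x ≤ y → y ≤ M → U y ≤ U x) (hUM : U M = 0)
    {x : ℕ} (hx1 : 1 ≤ x) (hxM : x ≤ M) : 0 ≤ U x := by
  have := hU hx1 hxM le_rfl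
  linarith

lemma Tmono (M : ℕ) (p : ℝ) (U : ℕ → ℝ) (hp : 0 < p) (hp1 : p < 1)
    (hU : ∀ ⦃x y : ℕ⦄, 1 ≤ x → x ≤ y → y ≤ M → U y ≤ U x) (hUM : U M = 0)
    {s : ℕ} (hs : 1 ≤ s) :
    Tsum M p U (s + 1) ≤ Tsum M p U s := by
  unfold Tsum
  have hsub : (M - (s+1)) ≤ M - s := by omega
  calc ∑ i ∈ Finset.range (M - (s+1)), U (s + 1 + i) * (1 - p) ^ i
      ≤ ∑ i ∈ Finset.range (M - (s+1)), U (s + i) * (1 - p) ^ i := by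
        refine Finset.sum_le_sum fun i hi => ?_
        have hi' := Finset.mem_range.mp hi
        have h1 : U (s + 1 + i) ≤ U (s + i) := by
          have : s + 1 + i = (s + i) + 1 := by omega
          rw [this]
          exact hU (by omega) (by omega) (by omega)
        have h2 : (0:ℝ) ≤ (1 - p) ^ i := pow_nonneg (by linarith) i
        exact mul_le_mul_of_nonneg_right h1 h2
    _ ≤ ∑ i ∈ Finset.range (M - s), U (s + i) * (1 - p) ^ i := by
        refine Finset.sum_le_sum_of_subset_of_nonneg
          (Finset.range_subset_range.mpr hsub) fun i hi _ => ?_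
        have hi' := Finset.mem_range.mp hi
        have h3 : 0 ≤ U (s + i) := Unonneg M U hU hUM (by omega) (by omega)
        exact mul_nonneg h3 (pow_nonneg (by linarith) i)

lemma Dpos (p : ℝ) (hp : 0 < p) (hp1 : p < 1) (s : ℕ) :
    0 < (s : ℝ) + (1 - p) / p := by
  have h1 : (0:ℝ) ≤ s := Nat.cast_nonneg s
  have h2 : 0 < (1 - p) / p := div_pos (by linarith) hp
  linarith

lemma E_rec (M : ℕ) (p G P B : ℝ) (U : ℕ → ℝ) (hp : 0 < p) (hp1 : p < 1)
    {s : ℕ} (hs1 : 1 ≤ s) (hsM : s < M) :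
    Ereward M p G P B U (s + 1) =
      (((s : ℝ) + (1 - p) / p) * Ereward M p G P B U s + p * Tsum M p U (s + 1))
        / (((s : ℝ) + (1 - p) / p) + 1) := by
  have hD : ((s : ℝ) + (1 - p) / p) ≠ 0 := ne_of_gt (Dpos p hp hp1 s)
  rw [E_eq M p G P B U (le_of_lt hsM), E_eq M p G P B U (by omega : s + 1 ≤ M)]
  have hIcc : ∑ x ∈ Finset.Icc 1 (s + 1 - 1), U x
      = (∑ x ∈ Finset.Icc 1 (s - 1), U x) + U s := by
    have h1 : s + 1 - 1 = (s - 1) + 1 := by omega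
    rw [h1, Finset.sum_Icc_succ_top (by omega : 1 ≤ (s-1)+1)]
    congr 2
    omega
  rw [hIcc, Trec M p U hsM, mul_inv_cancel_left₀ hD]
  push_cast
  have hcast : ((s : ℝ) + 1) + (1 - p) / p = ((s : ℝ) + (1 - p) / p) + 1 := by ring
  rw [hcast, div_eq_mul_inv, mul_comm]
  ring

lemma E_one (M : ℕ) (p G P B : ℝ) (U : ℕ → ℝ) (hp : 0 < p) (hp1 : p < 1) (hM : 2 ≤ M) :
    Ereward M p G P B U 1 = p * (Tsum M p U 1 - (G / p + P - B)) := by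
  rw [E_eq M p G P B U (by omega : 1 ≤ M)]
  simp only [Nat.cast_one]
  rw [show (1:ℕ) - 1 = 0 from rfl]
  rw [show Finset.Icc 1 0 = (∅ : Finset ℕ) by simp]
  have h : (1:ℝ) + (1 - p) / p = 1 / p := by field_simp; ring
  rw [h]
  simp only [Finset.sum_empty, zero_add, one_div, inv_inv]

lemma sum_eq_T1 (M : ℕ) (p : ℝ) (U : ℕ → ℝ) :
    ∑ x ∈ Finset.Icc 1 (M - 1), U x * (1 - p) ^ (x - 1) = Tsum M p U 1 := by
  rw [← Finset.Ico_add_one_right_eq_Icc, Finset.sum_Ico_eq_sum_range]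
  unfold Tsum
  rw [show M - 1 + 1 - 1 = M - 1 by omega]
  refine Finset.sum_congr rfl fun i _ => ?_
  rw [show 1 + i - 1 = i by omega]

lemma key_iff (M : ℕ) (p G P B : ℝ) (U : ℕ → ℝ) (hM : 2 ≤ M) (hp : 0 < p) (hp1 : p < 1) :
    p * Tsum M p U 2 ≤ Ereward M p G P B U 1 ↔
    (1 / (1 - p)) *
        (U 1 - p * ∑ x ∈ Finset.Icc 1 (M - 1), U x * (1 - p) ^ (x - 1))
      ≥ G / p + P - B := by
  rw [sum_eq_T1, E_one M p G P B U hp hp1 hM, Trec M p U (show 1 < M by omega)]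
  rw [ge_iff_le, one_div, inv_mul_eq_div, le_div_iff₀ (by linarith : (0:ℝ) < 1 - p)]
  set T2 := Tsum M p U (1 + 1) with hT2
  set C := G / p + P - B with hC
  constructor
  · intro h
    have hX : 0 ≤ U 1 - C - p * T2 := by nlinarith
    nlinarith
  · intro h
    have hX : 0 ≤ U 1 - C - p * T2 := by nlinarith
    nlinarith

/-- The always-active threshold `s = 1` is optimal iff
`(1/(1−p))·(U(1) − p Σ_{x=1}^{M−1} U(x)(1−p)^{x−1}) ≥ G/p + P − B`. -/
theorem always_active_optimal_iff (M : ℕ) (p G P B : ℝ) (U : ℕ → ℝ)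
    (hM : 2 ≤ M) (hp : 0 < p) (hp1 : p < 1)
    (hU : ∀ ⦃x y : ℕ⦄, 1 ≤ x → x ≤ y → y ≤ M → U y ≤ U x)
    (hUM : U M = 0) :
    (∀ s ∈ Finset.Icc 1 (M + 1),
        Ereward M p G P B U s ≤ Ereward M p G P B U 1) ↔
    (1 / (1 - p)) *
        (U 1 - p * ∑ x ∈ Finset.Icc 1 (M - 1), U x * (1 - p) ^ (x - 1))
      ≥ G / p + P - B := by
  rw [← key_iff M p G P B U hM hp hp1]
  constructor
  · intro h
    have h2 := h 2 (Finset.mem_Icc.mpr ⟨by omega, by omega⟩)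
    have hrec := E_rec M p G P B U hp hp1 (le_refl 1) (show 1 < M by omega)
    rw [show (1:ℕ) + 1 = 2 by rfl] at hrec
    rw [hrec] at h2
    have hD : 0 < ((1:ℕ):ℝ) + (1 - p) / p := Dpos p hp hp1 1
    rw [div_le_iff₀ (by linarith)] at h2
    nlinarith
  · intro h s hs
    rw [Finset.mem_Icc] at hs
    have main : ∀ k, 1 + k ≤ M →
        Ereward M p G P B U (1 + k) ≤ Ereward M p G P B U 1 ∧
        p * Tsum M p U (1 + k + 1) ≤ Ereward M p G P B U (1 + k) := by
      intro k
      induction k with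
      | zero => exact fun _ => ⟨le_rfl, h⟩
      | succ n ih =>
        intro hle
        obtain ⟨h1, h2⟩ := ih (by omega)
        have hrec := E_rec M p G P B U hp hp1 (show 1 ≤ 1 + n by omega)
          (show 1 + n < M by omega)
        have hD : 0 < ((1 + n : ℕ):ℝ) + (1 - p) / p := Dpos p hp hp1 (1 + n)
        rw [show 1 + (n + 1) = 1 + n + 1 by omega, hrec]
        have hprod := mul_le_mul_of_nonneg_left h2 (le_of_lt hD)
        constructor
        · rw [div_le_iff₀ (by linarith)]
          have hprod1 := mul_le_mul_of_nonneg_left h1 (le_of_lt hD)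
          nlinarith
        · have hTm : Tsum M p U (1 + n + 1 + 1) ≤ Tsum M p U (1 + n + 1) :=
            Tmono M p U hp hp1 hU hUM (by omega)
          rw [le_div_iff₀ (by linarith)]
          have hTm' := mul_le_mul_of_nonneg_left hTm (le_of_lt hp)
          have hTm2 := mul_le_mul_of_nonneg_left
            (mul_le_mul_of_nonneg_left hTm (le_of_lt hp)) (le_of_lt hD)
          nlinarith
    rcases eq_or_lt_of_le hs.2 with heq | hlt
    · rw [heq, E_top]
      have hmm := main (M - 1) (by omega)
      have hT0 : Tsum M p U (1 + (M - 1) + 1) = 0 := by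
        unfold Tsum
        rw [show M - (1 + (M - 1) + 1) = 0 by omega]
        simp
      rw [hT0, show 1 + (M - 1) = M by omega] at hmm
      obtain ⟨ha, hb⟩ := hmm
      simp only [mul_zero] at hb
      linarith
    · have hsM : s ≤ M := by omega
      have hmm := (main (s - 1) (by omega)).1
      rwa [show 1 + (s - 1) = s by omega] at hmm
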